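/- Let Bin(m, p') be a binomial variable with m = t + x trials where x ≥ 3t/(4p_h), and let δ_x = p'·(4x p_h − t(1 − 4p_h))/(4p_h). Then P{Bin(t+x, p') ≤ (t+x)p' − δ_x} ≤ exp(−t(2 + 1/(2p_h))·p'²) ≤ exp(−t p'²/(2p_h)). -/

import Mathlib

open Real

/-- PMF of the binomial distribution with `n` trials and success probability `p`. -/
noncomputable def binPMF (n : ℕ) (p : ℝ) (k : ℕ) : ℝ :=
  (n.choose k : ℝ) * p ^ k * (1 - p) ^ (n - k)

private lemma nonneg_of_hasDerivAt' (f f' : ℝ → ℝ) (hf : ∀ y, HasDerivAt f (f' y) y)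
    (h0 : f 0 = 0) (hf' : ∀ y, 0 ≤ y → 0 ≤ f' y) : ∀ y, 0 ≤ y → 0 ≤ f y := by
  intro y hy
  have mono : MonotoneOn f (Set.Ici (0:ℝ)) := by
    apply monotoneOn_of_deriv_nonneg (convex_Ici 0)
      (fun z _ => (hf z).continuousAt.continuousWithinAt)
      (fun z _ => ((hf z).differentiableAt.differentiableWithinAt))
    intro z hz
    rw [(hf z).deriv]
    rw [interior_Ici] at hz
    exact hf' z (le_of_lt hz)
  have := mono (Set.self_mem_Ici) (Set.mem_Ici.2 hy) hy
  linarith [this, h0.symm ▸ this]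

private lemma hoeffding_aux' (p : ℝ) (hp : 0 < p) (hp1 : p ≤ 1) (l : ℝ) (hl : 0 ≤ l) :
    1 - p + p * exp (-l) ≤ exp (-p * l + l ^ 2 / 8) := by
  have hD : ∀ z : ℝ, 0 < 1 - p + p * exp (-z) := by
    intro z
    have := exp_pos (-z)
    nlinarith
  have hDd : ∀ z : ℝ, HasDerivAt (fun w => 1 - p + p * exp (-w)) (-(p * exp (-z))) z := by
    intro z
    have h1 : HasDerivAt (fun w : ℝ => exp (-w)) (-exp (-z)) z := by
      have := (Real.hasDerivAt_exp (-z)).comp z (hasDerivAt_neg z)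
      simp only [mul_neg, mul_one] at this; exact this
    have := h1.const_mul p
    refine (this.const_add (1 - p)).congr_deriv ?_
    ring
  set F2 : ℝ → ℝ := fun z => -p + z / 4 + p * exp (-z) / (1 - p + p * exp (-z)) with hF2def
  have hF2d : ∀ z : ℝ, HasDerivAt F2
      (1 / 4 - p * exp (-z) * (1 - p) / (1 - p + p * exp (-z)) ^ 2) z := by
    intro z
    have hnum : HasDerivAt (fun w => p * exp (-w)) (-(p * exp (-z))) z := by
      have h1 : HasDerivAt (fun w : ℝ => exp (-w)) (-exp (-z)) z := by
        have := (Real.hasDerivAt_exp (-z)).comp z (hasDerivAt_neg z)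
        simp only [mul_neg, mul_one] at this; exact this
      have := h1.const_mul p
      refine this.congr_deriv ?_; ring
    have hdiv := hnum.div (hDd z) (ne_of_gt (hD z))
    have hlin : HasDerivAt (fun w : ℝ => -p + w / 4) (1/4) z := by
      simpa using ((hasDerivAt_id z).div_const 4).const_add (-p)
    have := hlin.add hdiv
    refine this.congr_deriv ?_
    have := hD z
    field_simp
    ring
  have hF2nonneg : ∀ z, 0 ≤ z → 0 ≤ F2 z := by
    apply nonneg_of_hasDerivAt' F2 _ hF2d
    · simp [hF2def]
    · intro z hz
      have hD2 := hD z
      have hE := exp_pos (-z)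
      have key : 4 * (p * exp (-z) * (1 - p)) ≤ (1 - p + p * exp (-z)) ^ 2 := by
        nlinarith [sq_nonneg (1 - p - p * exp (-z))]
      have h2 : p * exp (-z) * (1 - p) / (1 - p + p * exp (-z)) ^ 2 ≤ 1 / 4 := by
        rw [div_le_div_iff₀ (by positivity) (by norm_num)]
        linarith
      linarith
  set F1 : ℝ → ℝ := fun z => -p * z + z ^ 2 / 8 - Real.log (1 - p + p * exp (-z)) with hF1def
  have hF1d : ∀ z : ℝ, HasDerivAt F1 (F2 z) z := by
    intro z
    have hlog := (hDd z).log (ne_of_gt (hD z))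
    have hpoly : HasDerivAt (fun w : ℝ => -p * w + w ^ 2 / 8) (-p + z / 4) z := by
      have h1 := (hasDerivAt_id z).const_mul (-p)
      have h2 := (hasDerivAt_pow 2 z).div_const 8
      have := h1.add h2
      refine this.congr_deriv ?_; push_cast; ring
    have := hpoly.sub hlog
    refine this.congr_deriv ?_
    simp only [hF2def]
    ring
  have hF1nonneg : ∀ z, 0 ≤ z → 0 ≤ F1 z := by
    apply nonneg_of_hasDerivAt' F1 F2 hF1d
    · simp [hF1def]
    · exact hF2nonneg
  have := hF1nonneg l hl
  have hlog : Real.log (1 - p + p * exp (-l)) ≤ -p * l + l ^ 2 / 8 := by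
    simp only [hF1def] at this; linarith
  calc 1 - p + p * exp (-l) = exp (Real.log (1 - p + p * exp (-l))) := (exp_log (hD l)).symm
    _ ≤ exp (-p * l + l ^ 2 / 8) := exp_le_exp.2 hlog

private lemma chernoff_step' (n : ℕ) (p c l : ℝ) (hp : 0 ≤ p) (hp1 : p ≤ 1) (hl : 0 ≤ l) :
    (∑ k ∈ Finset.range (n + 1), if (k : ℝ) ≤ c then binPMF n p k else 0)
      ≤ exp (l * c) * (p * exp (-l) + (1 - p)) ^ n := by
  have hsum : (p * exp (-l) + (1 - p)) ^ n
      = ∑ k ∈ Finset.range (n + 1),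
        (p * exp (-l)) ^ k * (1 - p) ^ (n - k) * (n.choose k : ℝ) := add_pow _ _ _
  rw [hsum, Finset.mul_sum]
  apply Finset.sum_le_sum
  intro k hk
  have hpmf : 0 ≤ binPMF n p k := by
    unfold binPMF
    have h1 : (0:ℝ) ≤ 1 - p := by linarith
    positivity
  by_cases hc : (k : ℝ) ≤ c
  · simp only [hc, if_pos]
    have h1 : (1:ℝ) ≤ exp (l * c) * exp (-l) ^ k := by
      rw [← exp_nat_mul, ← exp_add]
      rw [show (1:ℝ) = exp 0 by simp]
      apply exp_le_exp.2
      have : 0 ≤ l * (c - k) := mul_nonneg hl (by linarith)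
      nlinarith
    calc binPMF n p k = 1 * binPMF n p k := (one_mul _).symm
      _ ≤ (exp (l * c) * exp (-l) ^ k) * binPMF n p k := by
          apply mul_le_mul_of_nonneg_right h1 hpmf
      _ = exp (l * c) * ((p * exp (-l)) ^ k * (1 - p) ^ (n - k) * (n.choose k : ℝ)) := by
          unfold binPMF; ring
  · simp only [hc, if_neg, not_false_iff]
    have h1 : (0:ℝ) ≤ 1 - p := by linarith
    positivity

private lemma hoeffding_binomial' (n : ℕ) (hn : 0 < n) (p s : ℝ) (hp : 0 < p) (hp1 : p ≤ 1)
    (hs : 0 ≤ s) :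
    (∑ k ∈ Finset.range (n + 1), if (k : ℝ) ≤ (n : ℝ) * p - s then binPMF n p k else 0)
      ≤ exp (-(2 * s ^ 2 / n)) := by
  have hn' : (0:ℝ) < n := by exact_mod_cast hn
  set l : ℝ := 4 * s / n with hldef
  have hl : 0 ≤ l := by positivity
  calc (∑ k ∈ Finset.range (n + 1), if (k : ℝ) ≤ (n : ℝ) * p - s then binPMF n p k else 0)
      ≤ exp (l * ((n : ℝ) * p - s)) * (p * exp (-l) + (1 - p)) ^ n :=
        chernoff_step' n p _ l (le_of_lt hp) hp1 hl
    _ ≤ exp (l * ((n : ℝ) * p - s)) * (exp (-p * l + l ^ 2 / 8)) ^ n := by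
        apply mul_le_mul_of_nonneg_left _ (le_of_lt (exp_pos _))
        apply pow_le_pow_left₀
        · have := exp_pos (-l); nlinarith
        · have := hoeffding_aux' p hp hp1 l hl; linarith
    _ = exp (l * ((n : ℝ) * p - s) + n * (-p * l + l ^ 2 / 8)) := by
        rw [← exp_nat_mul, ← exp_add]
    _ ≤ exp (-(2 * s ^ 2 / n)) := by
        apply exp_le_exp.2
        have : l * ((n : ℝ) * p - s) + n * (-p * l + l ^ 2 / 8) = -(2 * s ^ 2 / n) := by
          rw [hldef]; field_simp; ring
        linarith [this.le]

/-- Binomial lower-deviation bound used in the child-samples analysis: for `x ≥ 3t/(4p_h)` and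
`δ_x = p'(4xp_h - t(1-4p_h))/(4p_h)`,
`P{Bin(t+x, p') ≤ (t+x)p' - δ_x} ≤ exp(-t(2 + 1/(2p_h))p'²) ≤ exp(-tp'²/(2p_h))`. -/
theorem binomial_child_samples_tail (t x : ℕ) (p_h p' : ℝ)
    (hph : 0 < p_h) (hph1 : p_h ≤ 1) (hp' : 0 < p') (hp'1 : p' ≤ 1) (ht : 1 ≤ t)
    (hx : 3 * (t : ℝ) / (4 * p_h) ≤ (x : ℝ)) :
    (∑ k ∈ Finset.range (t + x + 1),
        if (k : ℝ) ≤ ((t : ℝ) + x) * p'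
            - p' * (4 * x * p_h - t * (1 - 4 * p_h)) / (4 * p_h)
        then binPMF (t + x) p' k else 0)
        ≤ Real.exp (-((t : ℝ) * (2 + 1 / (2 * p_h)) * p' ^ 2))
      ∧ Real.exp (-((t : ℝ) * (2 + 1 / (2 * p_h)) * p' ^ 2))
        ≤ Real.exp (-((t : ℝ) * p' ^ 2) / (2 * p_h)) := by
  set n : ℕ := t + x with hndef
  have hn : 0 < n := by omega
  have hn' : (0:ℝ) < (n : ℝ) := by exact_mod_cast hn
  set A : ℝ := (t : ℝ) / (4 * p_h) with hAdef
  have hA : 0 < A := by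
    apply div_pos _ (by linarith)
    exact_mod_cast Nat.lt_of_lt_of_le Nat.zero_lt_one ht
  have hxA : 3 * A ≤ (x : ℝ) := by
    rw [hAdef]
    calc 3 * ((t : ℝ) / (4 * p_h)) = 3 * (t : ℝ) / (4 * p_h) := by ring
      _ ≤ (x : ℝ) := hx
  have hnA : (t : ℝ) + 3 * A ≤ (n : ℝ) := by
    have : (n : ℝ) = (t : ℝ) + (x : ℝ) := by push_cast [hndef]; ring
    linarith
  set s : ℝ := p' * (4 * x * p_h - t * (1 - 4 * p_h)) / (4 * p_h) with hsdef
  have hseq : s = p' * ((n : ℝ) - A) := by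
    rw [hsdef, hAdef]
    have hn'' : (n : ℝ) = (t : ℝ) + (x : ℝ) := by push_cast [hndef]; ring
    rw [hn'', div_eq_iff (show (4:ℝ) * p_h ≠ 0 by positivity)]
    have hc : (t:ℝ) / (4 * p_h) * (4 * p_h) = (t:ℝ) :=
      div_mul_cancel₀ _ (by positivity)
    have hinv : p_h * p_h⁻¹ = 1 := mul_inv_cancel₀ (ne_of_gt hph)
    linear_combination (-p') * hc + 2 * p' * (t:ℝ) * hinv
  have hs : 0 ≤ s := by
    rw [hseq]
    apply mul_nonneg (le_of_lt hp')
    linarith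
  have key : (n : ℝ) * ((t : ℝ) + A) ≤ ((n : ℝ) - A) ^ 2 := by
    nlinarith [sq_nonneg A, mul_nonneg (le_of_lt hn') (sub_nonneg.2 hnA)]
  have hexp : (t : ℝ) * (2 + 1 / (2 * p_h)) * p' ^ 2 ≤ 2 * s ^ 2 / n := by
    have h1 : (t : ℝ) * (2 + 1 / (2 * p_h)) * p' ^ 2 = 2 * p' ^ 2 * ((t : ℝ) + A) := by
      rw [hAdef]; field_simp; ring
    rw [h1, hseq, le_div_iff₀ hn']
    have hp2 : (0:ℝ) ≤ p' ^ 2 := sq_nonneg p'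
    nlinarith [key]
  constructor
  · have hmain := hoeffding_binomial' n hn p' s hp' hp'1 hs
    have hthr : ((t : ℝ) + x) * p' - p' * (4 * x * p_h - t * (1 - 4 * p_h)) / (4 * p_h)
        = (n : ℝ) * p' - s := by
      rw [hsdef]
      push_cast [hndef]
      ring
    calc (∑ k ∈ Finset.range (t + x + 1),
          if (k : ℝ) ≤ ((t : ℝ) + x) * p'
              - p' * (4 * x * p_h - t * (1 - 4 * p_h)) / (4 * p_h)
          then binPMF (t + x) p' k else 0)
        = (∑ k ∈ Finset.range (n + 1),
          if (k : ℝ) ≤ (n : ℝ) * p' - s then binPMF n p' k else 0) := by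
          rw [hndef]
          apply Finset.sum_congr rfl
          intro k _
          rw [hthr]
      _ ≤ exp (-(2 * s ^ 2 / n)) := hmain
      _ ≤ exp (-((t : ℝ) * (2 + 1 / (2 * p_h)) * p' ^ 2)) := by
          apply exp_le_exp.2
          linarith
  · apply exp_le_exp.2
    have h1 : (t : ℝ) * (2 + 1 / (2 * p_h)) * p' ^ 2
        = 2 * (t : ℝ) * p' ^ 2 + (t : ℝ) * p' ^ 2 / (2 * p_h) := by
      field_simp
    have ht' : (0:ℝ) ≤ (t : ℝ) := Nat.cast_nonneg t
    have hp2 : (0:ℝ) ≤ p' ^ 2 := sq_nonneg p'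
    have : 0 ≤ 2 * (t : ℝ) * p' ^ 2 := by positivity
    rw [neg_div]
    linarith [h1]
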